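/- If z ∈ ℍ is a zero of the monic quaternionic polynomial p(μ) = μᵏ + a_{k−1}μ^{k−1} + ⋯ + a₀ of degree k ≥ 5, then |z| ≤ ( (1/2)[ η₁ + η₂ + √((η₁ − η₂)² + 4τ₁τ₂) ] )^{1/3}, where η₁² = (1/2)[ Σ_{i=k−2}^{k−1}(|bᵢ|² + |cᵢ|²) + √((Σ_{i=k−2}^{k−1}(|bᵢ|² − |cᵢ|²))² + 4|Σ_{i=k−2}^{k−1} bᵢc̄ᵢ|²) ], η₂² = (1/2)[ 1 + Σ_{i=0}^{k−3}|aᵢ|² + √((1 + Σ_{i=0}^{k−3}|aᵢ|²)² − 4(|a₀|² + |a₁|² + |a₂|²)) ], τ₁ = √(|a_{k−1}|² + |a_{k−2}|² + 1), τ₂² = (1/2)[ Σ_{i=0}^{k−3}(|bᵢ|² + |cᵢ|²) + √((Σ_{i=0}^{k−3}(|bᵢ|² − |cᵢ|²))² + 4|Σ_{i=0}^{k−3} bᵢc̄ᵢ|²) ], with bᵢ = a_{k−1}aᵢ − a_{i−1}, cᵢ = −a_{k−1}bᵢ + a_{k−2}aᵢ − a_{i−2}, a_{−1} = a_{−2}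 = 0. -/

import Mathlib

open scoped Matrix Quaternion BigOperators

noncomputable section

/-- Euclidean norm of a vector with entries in a normed ring (e.g. the quaternions). -/
def qVecNorm {R : Type*} [NormedRing R] {n : Type*} [Fintype n] (x : n → R) : ℝ :=
  Real.sqrt (∑ i, ‖x i‖ ^ 2)

/-- Operator 2-norm (spectral norm) of a matrix over a normed ring. -/
def qSpecNorm {R : Type*} [NormedRing R] {m n : Type*} [Fintype m] [Fintype n]
    (A : Matrix m n R) : ℝ :=
  sSup {c : ℝ | ∃ x : n → R, x ≠ 0 ∧ c = qVecNorm (A.mulVec x) / qVecNorm x}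

/-- `μ` is a right eigenvalue of the quaternionic matrix `A`. -/
def RightEig {n : Type*} [Fintype n] (A : Matrix n n ℍ[ℝ]) (μ : ℍ[ℝ]) : Prop :=
  ∃ x : n → ℍ[ℝ], x ≠ 0 ∧ A.mulVec x = fun i => x i * μ

/-- Right spectral radius of a quaternionic matrix. -/
def rSpecRad {n : Type*} [Fintype n] (A : Matrix n n ℍ[ℝ]) : ℝ :=
  sSup {r : ℝ | ∃ μ : ℍ[ℝ], RightEig A μ ∧ r = ‖μ‖}

/-- Spectral radius of a real 2×2 matrix. -/
def realSpecRad (B : Matrix (Fin 2) (Fin 2) ℝ) : ℝ :=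
  sSup {r : ℝ | ∃ μ ∈ spectrum ℝ B, r = |μ|}

/-- `bᵢ = a_{k-1} aᵢ - a_{i-1}` with `a_{-1} = 0`. -/
def bseq (k : ℕ) (a : ℕ → ℍ[ℝ]) (i : ℕ) : ℍ[ℝ] :=
  a (k - 1) * a i - (if i = 0 then 0 else a (i - 1))

/-- `cᵢ = -a_{k-1} bᵢ + a_{k-2} aᵢ - a_{i-2}` with `a_{-1} = a_{-2} = 0`. -/
def cseq (k : ℕ) (a : ℕ → ℍ[ℝ]) (i : ℕ) : ℍ[ℝ] :=
  -(a (k - 1) * bseq k a i) + a (k - 2) * a i - (if i ≤ 1 then 0 else a (i - 2))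

/-- `z` is a zero of the monic quaternionic polynomial
`p(μ) = μᵏ + a_{k-1}μ^{k-1} + ⋯ + a₀` (coefficients on the left). -/
def IsPolyZero (k : ℕ) (a : ℕ → ℍ[ℝ]) (z : ℍ[ℝ]) : Prop :=
  (∑ i ∈ Finset.range k, a i * z ^ i) + z ^ k = 0

/-! ### Auxiliary lemmas -/

set_option maxHeartbeats 2000000

namespace ZB3Aux

lemma qre_le_norm (x : ℍ[ℝ]) : x.re ≤ ‖x‖ := by
  have h := Quaternion.normSq_eq_norm_mul_self x
  rw [Quaternion.normSq_def'] at h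
  nlinarith [norm_nonneg x, sq_nonneg x.imI, sq_nonneg x.imJ, sq_nonneg x.imK,
    sq_nonneg (x.re - ‖x‖)]

lemma qre_sum {ι : Type*} (s : Finset ι) (f : ι → ℍ[ℝ]) :
    (∑ i ∈ s, f i).re = ∑ i ∈ s, (f i).re := by
  induction s using Finset.cons_induction with
  | empty => simp
  | cons a s ha ih => simp [Finset.sum_cons, ih]

lemma qnorm_sq (x : ℍ[ℝ]) : ‖x‖ ^ 2 = (star x * x).re := by
  rw [Quaternion.star_mul_self, Quaternion.re_coe, Quaternion.normSq_eq_norm_mul_self]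
  ring

lemma qnorm_add_sq (x y : ℍ[ℝ]) : ‖x + y‖ ^ 2 = ‖x‖ ^ 2 + ‖y‖ ^ 2 + 2 * (x * star y).re := by
  have h := Quaternion.normSq_eq_norm_mul_self (x + y)
  have h1 := Quaternion.normSq_eq_norm_mul_self x
  have h2 := Quaternion.normSq_eq_norm_mul_self y
  simp only [Quaternion.normSq_def'] at h h1 h2
  simp only [Quaternion.re_mul, Quaternion.re_star, Quaternion.imI_star, Quaternion.imJ_star,
    Quaternion.imK_star, Quaternion.re_add, Quaternion.imI_add, Quaternion.imJ_add,
    Quaternion.imK_add] at *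
  nlinarith [h, h1, h2]

lemma sqrt_add_le (X Y Z : ℝ) (hX : 0 ≤ X) (hY : 0 ≤ Y)
    (hZ : Z ≤ X + Y + 2 * Real.sqrt X * Real.sqrt Y) :
    Real.sqrt Z ≤ Real.sqrt X + Real.sqrt Y := by
  have h1 : X + Y + 2 * Real.sqrt X * Real.sqrt Y = (Real.sqrt X + Real.sqrt Y) ^ 2 := by
    rw [add_sq, Real.sq_sqrt hX, Real.sq_sqrt hY]; ring
  calc Real.sqrt Z ≤ Real.sqrt ((Real.sqrt X + Real.sqrt Y) ^ 2) :=
        Real.sqrt_le_sqrt (h1 ▸ hZ)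
    _ = Real.sqrt X + Real.sqrt Y := Real.sqrt_sq (by positivity)

lemma quadform (B C G s t : ℝ) (hB : 0 ≤ B) (hC : 0 ≤ C) (hG : 0 ≤ G) (hs : 0 ≤ s) (ht : 0 ≤ t) :
    B * s ^ 2 + C * t ^ 2 + 2 * G * s * t ≤
      ((B + C + Real.sqrt ((B - C) ^ 2 + 4 * G ^ 2)) / 2) * (s ^ 2 + t ^ 2) := by
  set D := Real.sqrt ((B - C) ^ 2 + 4 * G ^ 2) with hD
  have hD0 : 0 ≤ D := Real.sqrt_nonneg _
  have hD2 : D ^ 2 = (B - C) ^ 2 + 4 * G ^ 2 := Real.sq_sqrt (by positivity)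
  have hp : 0 ≤ (C - B + D) / 2 := by nlinarith [hD2, hD0]
  have hq : 0 ≤ (B - C + D) / 2 := by nlinarith [hD2, hD0]
  have hpq : ((C - B + D) / 2) * ((B - C + D) / 2) = G ^ 2 := by linear_combination hD2 / 4
  have hsq : Real.sqrt ((C - B + D) / 2) * Real.sqrt ((B - C + D) / 2) = G := by
    rw [← Real.sqrt_mul hp, hpq, Real.sqrt_sq hG]
  nlinarith [sq_nonneg (Real.sqrt ((C - B + D) / 2) * s - Real.sqrt ((B - C + D) / 2) * t),
    Real.sq_sqrt hp, Real.sq_sqrt hq, hsq, mul_nonneg hs ht]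

lemma cs_q {ι : Type*} (s : Finset ι) (d x : ι → ℍ[ℝ]) :
    ‖∑ i ∈ s, d i * x i‖ ≤
      Real.sqrt (∑ i ∈ s, ‖d i‖ ^ 2) * Real.sqrt (∑ i ∈ s, ‖x i‖ ^ 2) := by
  have h0 : 0 ≤ ∑ i ∈ s, ‖d i‖ * ‖x i‖ := Finset.sum_nonneg fun i _ => by positivity
  have hcs := Finset.sum_mul_sq_le_sq_mul_sq s (fun i => ‖d i‖) (fun i => ‖x i‖)
  calc ‖∑ i ∈ s, d i * x i‖ ≤ ∑ i ∈ s, ‖d i * x i‖ := norm_sum_le _ _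
    _ = ∑ i ∈ s, ‖d i‖ * ‖x i‖ := by simp [norm_mul]
    _ ≤ Real.sqrt (∑ i ∈ s, ‖d i‖ ^ 2) * Real.sqrt (∑ i ∈ s, ‖x i‖ ^ 2) := by
        have := Real.sqrt_le_sqrt hcs
        rwa [Real.sqrt_sq h0, Real.sqrt_mul (by positivity)] at this

lemma perron (ρ α β η₁ η₂ τ₁ τ₂ : ℝ) (hα : 1 ≤ α) (hβ : 0 ≤ β)
    (hη₁ : 0 ≤ η₁) (hη₂ : 0 ≤ η₂) (hτ₁ : 0 ≤ τ₁) (hτ₂ : 0 ≤ τ₂)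
    (h1 : ρ * α ≤ η₂ * α + τ₁ * β) (h2 : ρ * β ≤ τ₂ * α + η₁ * β) :
    ρ ≤ (1 / 2) * (η₁ + η₂ + Real.sqrt ((η₁ - η₂) ^ 2 + 4 * τ₁ * τ₂)) := by
  set D := Real.sqrt ((η₁ - η₂) ^ 2 + 4 * τ₁ * τ₂) with hD
  have hD0 : 0 ≤ D := Real.sqrt_nonneg _
  have hD2 : D ^ 2 = (η₁ - η₂) ^ 2 + 4 * τ₁ * τ₂ := Real.sq_sqrt (by positivity)
  by_cases hc1 : ρ ≤ η₂
  · nlinarith [hD2, hD0, sq_nonneg (D - (η₂ - η₁)), sq_nonneg (D + (η₂ - η₁))]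
  by_cases hc2 : ρ ≤ η₁
  · nlinarith [hD2, hD0, sq_nonneg (D - (η₁ - η₂)), sq_nonneg (D + (η₁ - η₂))]
  push_neg at hc1 hc2
  have hβpos : 0 < β := by
    by_contra hb
    push_neg at hb
    have hb0 : β = 0 := le_antisymm hb hβ
    rw [hb0] at h1
    nlinarith [h1]
  have hkey : (ρ - η₂) * (ρ - η₁) ≤ τ₁ * τ₂ := by
    have p1 : (ρ - η₂) * α ≤ τ₁ * β := by nlinarith [h1]
    have p2 : (ρ - η₁) * β ≤ τ₂ * α := by nlinarith [h2]
    have hmul : ((ρ - η₂) * α) * ((ρ - η₁) * β) ≤ (τ₁ * β) * (τ₂ * α) := by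
      apply mul_le_mul p1 p2 (mul_nonneg (by linarith) hβ) (by positivity)
    nlinarith [hmul, mul_pos (lt_of_lt_of_le one_pos hα) hβpos]
  have hs : 0 < 2 * ρ - η₁ - η₂ := by nlinarith
  have hfin : 2 * ρ - η₁ - η₂ ≤ D := by nlinarith [hD2, hD0, hkey]
  linarith

lemma blockA (Q R s2 t2 W : ℝ) (hQ : 0 ≤ Q) (hR : 0 ≤ R) (hs : 0 ≤ s2) (ht : 0 ≤ t2)
    (hW0 : 0 ≤ W)
    (hW : W ≤ Real.sqrt Q * Real.sqrt s2 + Real.sqrt R * Real.sqrt t2) :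
    Real.sqrt (t2 + W ^ 2) ≤
      Real.sqrt ((1 / 2) * (1 + (Q + R) + Real.sqrt ((1 + (Q + R)) ^ 2 - 4 * Q))) *
        Real.sqrt (s2 + t2) := by
  have qf := quadform Q (1 + R) (Real.sqrt Q * Real.sqrt R) (Real.sqrt s2) (Real.sqrt t2)
    hQ (by linarith) (by positivity) (Real.sqrt_nonneg _) (Real.sqrt_nonneg _)
  rw [Real.sq_sqrt hs, Real.sq_sqrt ht] at qf
  have hGr : (Q - (1 + R)) ^ 2 + 4 * (Real.sqrt Q * Real.sqrt R) ^ 2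
      = (1 + (Q + R)) ^ 2 - 4 * Q := by
    rw [mul_pow, Real.sq_sqrt hQ, Real.sq_sqrt hR]; ring
  rw [hGr] at qf
  have hW2 : W ^ 2 ≤ (Real.sqrt Q * Real.sqrt s2 + Real.sqrt R * Real.sqrt t2) ^ 2 :=
    pow_le_pow_left₀ hW0 hW 2
  have hexp : (Real.sqrt Q * Real.sqrt s2 + Real.sqrt R * Real.sqrt t2) ^ 2
      = Q * s2 + R * t2 + 2 * (Real.sqrt Q * Real.sqrt R) * Real.sqrt s2 * Real.sqrt t2 := by
    rw [add_sq, mul_pow, mul_pow, Real.sq_sqrt hQ, Real.sq_sqrt hR, Real.sq_sqrt hs,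
      Real.sq_sqrt ht]; ring
  have hsum : t2 + W ^ 2 ≤
      ((Q + (1 + R) + Real.sqrt ((1 + (Q + R)) ^ 2 - 4 * Q)) / 2) * (s2 + t2) := by
    nlinarith [qf, hW2, hexp]
  calc Real.sqrt (t2 + W ^ 2)
      ≤ Real.sqrt (((Q + (1 + R) + Real.sqrt ((1 + (Q + R)) ^ 2 - 4 * Q)) / 2) * (s2 + t2)) :=
        Real.sqrt_le_sqrt hsum
    _ = Real.sqrt ((1 / 2) * (1 + (Q + R) + Real.sqrt ((1 + (Q + R)) ^ 2 - 4 * Q))) *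
        Real.sqrt (s2 + t2) := by
        rw [show (Q + (1 + R) + Real.sqrt ((1 + (Q + R)) ^ 2 - 4 * Q)) / 2
            = (1 / 2) * (1 + (Q + R) + Real.sqrt ((1 + (Q + R)) ^ 2 - 4 * Q)) by ring,
          Real.sqrt_mul (by positivity)]

lemma rowpair {ι : Type*} (s : Finset ι) (b c u : ι → ℍ[ℝ]) :
    Real.sqrt (‖∑ i ∈ s, b i * u i‖ ^ 2 + ‖∑ i ∈ s, c i * u i‖ ^ 2) ≤
    Real.sqrt ((1 / 2) * ((∑ i ∈ s, (‖b i‖ ^ 2 + ‖c i‖ ^ 2)) +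
      Real.sqrt ((∑ i ∈ s, (‖b i‖ ^ 2 - ‖c i‖ ^ 2)) ^ 2 +
        4 * ‖∑ i ∈ s, b i * star (c i)‖ ^ 2))) *
    Real.sqrt (∑ i ∈ s, ‖u i‖ ^ 2) := by
  rw [Finset.sum_add_distrib, Finset.sum_sub_distrib]
  set p := ∑ i ∈ s, b i * u i with hp
  set q := ∑ i ∈ s, c i * u i with hq
  set B := ∑ i ∈ s, ‖b i‖ ^ 2 with hB
  set C := ∑ i ∈ s, ‖c i‖ ^ 2 with hC
  set G := ‖∑ i ∈ s, b i * star (c i)‖ with hG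
  set U := ∑ i ∈ s, ‖u i‖ ^ 2 with hU
  have hBnn : 0 ≤ B := Finset.sum_nonneg fun i _ => by positivity
  have hCnn : 0 ≤ C := Finset.sum_nonneg fun i _ => by positivity
  have hUnn : 0 ≤ U := Finset.sum_nonneg fun i _ => by positivity
  have hGnn : 0 ≤ G := norm_nonneg _
  clear_value p q B C G U
  set τ := Real.sqrt ((1 / 2) * (B + C + Real.sqrt ((B - C) ^ 2 + 4 * G ^ 2))) with hτ
  have hτnn : 0 ≤ τ := Real.sqrt_nonneg _
  have hτ2 : τ ^ 2 = (1 / 2) * (B + C + Real.sqrt ((B - C) ^ 2 + 4 * G ^ 2)) :=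
    Real.sq_sqrt (by positivity)
  clear_value τ
  -- expansion identity
  have e1 : ‖p‖ ^ 2 + ‖q‖ ^ 2 = (∑ i ∈ s, (star p * b i + star q * c i) * u i).re := by
    rw [qnorm_sq p, qnorm_sq q, ← Quaternion.re_add]
    congr 1
    nth_rewrite 2 [hp]
    nth_rewrite 2 [hq]
    rw [Finset.mul_sum, Finset.mul_sum, ← Finset.sum_add_distrib]
    exact Finset.sum_congr rfl fun i _ => by rw [add_mul, mul_assoc, mul_assoc]
  have e4 : ∑ i ∈ s, ‖star p * b i + star q * c i‖ ^ 2 ≤ τ ^ 2 * (‖p‖ ^ 2 + ‖q‖ ^ 2) := by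
    have expand : ∀ i ∈ s, ‖star p * b i + star q * c i‖ ^ 2
        = ‖p‖ ^ 2 * ‖b i‖ ^ 2 + ‖q‖ ^ 2 * ‖c i‖ ^ 2
          + 2 * ((star p * (b i * star (c i))) * q).re := by
      intro i _
      rw [qnorm_add_sq]
      have h1 : (star p * b i) * star (star q * c i) = (star p * (b i * star (c i))) * q := by
        rw [star_mul, star_star]; noncomm_ring
      rw [h1, norm_mul, norm_mul, norm_star, norm_star]
      ring
    rw [Finset.sum_congr rfl expand]
    rw [Finset.sum_add_distrib, Finset.sum_add_distrib, ← Finset.mul_sum, ← Finset.mul_sum]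
    have e5 : ∑ i ∈ s, 2 * ((star p * (b i * star (c i))) * q).re
        = 2 * ((star p * (∑ i ∈ s, b i * star (c i))) * q).re := by
      rw [← Finset.mul_sum, ← qre_sum]
      congr 1
      rw [Finset.mul_sum, Finset.sum_mul]
    rw [e5, ← hB, ← hC]
    have e6 : ((star p * (∑ i ∈ s, b i * star (c i))) * q).re ≤ ‖p‖ * G * ‖q‖ := by
      calc ((star p * (∑ i ∈ s, b i * star (c i))) * q).re
          ≤ ‖(star p * (∑ i ∈ s, b i * star (c i))) * q‖ := qre_le_norm _
        _ = ‖p‖ * G * ‖q‖ := by rw [norm_mul, norm_mul, norm_star, hG]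
    have qf := quadform B C G ‖p‖ ‖q‖ hBnn hCnn hGnn (norm_nonneg p) (norm_nonneg q)
    calc ‖p‖ ^ 2 * B + ‖q‖ ^ 2 * C + 2 * ((star p * (∑ i ∈ s, b i * star (c i))) * q).re
        ≤ ‖p‖ ^ 2 * B + ‖q‖ ^ 2 * C + 2 * (‖p‖ * G * ‖q‖) := by linarith [e6]
      _ = B * ‖p‖ ^ 2 + C * ‖q‖ ^ 2 + 2 * G * ‖p‖ * ‖q‖ := by ring
      _ ≤ ((B + C + Real.sqrt ((B - C) ^ 2 + 4 * G ^ 2)) / 2) * (‖p‖ ^ 2 + ‖q‖ ^ 2) := qf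
      _ = τ ^ 2 * (‖p‖ ^ 2 + ‖q‖ ^ 2) := by rw [hτ2]; ring
  have hkey : ‖p‖ ^ 2 + ‖q‖ ^ 2 ≤ τ * Real.sqrt (‖p‖ ^ 2 + ‖q‖ ^ 2) * Real.sqrt U := by
    calc ‖p‖ ^ 2 + ‖q‖ ^ 2 = (∑ i ∈ s, (star p * b i + star q * c i) * u i).re := e1
      _ ≤ ‖∑ i ∈ s, (star p * b i + star q * c i) * u i‖ := qre_le_norm _
      _ ≤ Real.sqrt (∑ i ∈ s, ‖star p * b i + star q * c i‖ ^ 2) * Real.sqrt U := by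
          rw [hU]; exact cs_q s _ u
      _ ≤ Real.sqrt (τ ^ 2 * (‖p‖ ^ 2 + ‖q‖ ^ 2)) * Real.sqrt U := by
          have := Real.sqrt_le_sqrt e4
          exact mul_le_mul_of_nonneg_right this (Real.sqrt_nonneg _)
      _ = τ * Real.sqrt (‖p‖ ^ 2 + ‖q‖ ^ 2) * Real.sqrt U := by
          rw [Real.sqrt_mul (by positivity), Real.sqrt_sq hτnn]
  set N := Real.sqrt (‖p‖ ^ 2 + ‖q‖ ^ 2) with hN
  have hN2 : N ^ 2 = ‖p‖ ^ 2 + ‖q‖ ^ 2 := Real.sq_sqrt (by positivity)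
  have hNnn : 0 ≤ N := Real.sqrt_nonneg _
  rcases eq_or_lt_of_le hNnn with h0 | hpos
  · rw [← h0]; positivity
  · nlinarith [hkey, hN2]

lemma step (a d : ℕ → ℍ[ℝ]) (z : ℍ[ℝ]) (N n : ℕ)
    (hzN : z ^ (N + 1) = -∑ i ∈ Finset.range (N + 1), a i * z ^ i)
    (h : z ^ n = ∑ i ∈ Finset.range (N + 1), d i * z ^ i) :
    z ^ (n + 1) = ∑ i ∈ Finset.range (N + 1),
      ((if i = 0 then 0 else d (i - 1)) - d N * a i) * z ^ i := by
  have e1 : ∑ i ∈ Finset.range (N + 1),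
      ((if i = 0 then 0 else d (i - 1)) - d N * a i) * z ^ i
      = (∑ i ∈ Finset.range N, d i * z ^ (i + 1))
        - d N * ∑ i ∈ Finset.range (N + 1), a i * z ^ i := by
    have step1 : ∀ i : ℕ, ((if i = 0 then 0 else d (i - 1)) - d N * a i) * z ^ i
        = (if i = 0 then 0 else d (i - 1)) * z ^ i - d N * (a i * z ^ i) := fun i => by
      rw [sub_mul, mul_assoc]
    rw [Finset.sum_congr rfl fun i _ => step1 i, Finset.sum_sub_distrib, ← Finset.mul_sum,
      Finset.sum_range_succ']
    simp
  have e3 : ∀ i : ℕ, (d i * z ^ i) * z = d i * z ^ (i + 1) := fun i => by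
    rw [mul_assoc, ← pow_succ]
  have e2 : z ^ (n + 1) = (∑ i ∈ Finset.range N, d i * z ^ (i + 1))
      - d N * ∑ i ∈ Finset.range (N + 1), a i * z ^ i := by
    rw [pow_succ, h, Finset.sum_mul, Finset.sum_range_succ,
      Finset.sum_congr rfl fun i _ => e3 i, e3 N, hzN, mul_neg, ← sub_eq_add_neg]
  rw [e2, e1]

end ZB3Aux

open ZB3Aux in
theorem zero_bound_three (k : ℕ) (hk : 5 ≤ k) (a : ℕ → ℍ[ℝ]) (z : ℍ[ℝ])
    (hz : IsPolyZero k a z) :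
    ‖z‖ ≤ ((1 / 2) *
      ((Real.sqrt ((1 / 2) * ((∑ i ∈ Finset.Icc (k - 2) (k - 1), (‖bseq k a i‖ ^ 2 + ‖cseq k a i‖ ^ 2)) +
          Real.sqrt ((∑ i ∈ Finset.Icc (k - 2) (k - 1), (‖bseq k a i‖ ^ 2 - ‖cseq k a i‖ ^ 2)) ^ 2 +
            4 * ‖∑ i ∈ Finset.Icc (k - 2) (k - 1), bseq k a i * star (cseq k a i)‖ ^ 2)))) +
       (Real.sqrt ((1 / 2) * (1 + (∑ i ∈ Finset.range (k - 2), ‖a i‖ ^ 2) +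
          Real.sqrt ((1 + (∑ i ∈ Finset.range (k - 2), ‖a i‖ ^ 2)) ^ 2 -
            4 * (‖a 0‖ ^ 2 + ‖a 1‖ ^ 2 + ‖a 2‖ ^ 2))))) +
       Real.sqrt (((Real.sqrt ((1 / 2) * ((∑ i ∈ Finset.Icc (k - 2) (k - 1), (‖bseq k a i‖ ^ 2 + ‖cseq k a i‖ ^ 2)) +
            Real.sqrt ((∑ i ∈ Finset.Icc (k - 2) (k - 1), (‖bseq k a i‖ ^ 2 - ‖cseq k a i‖ ^ 2)) ^ 2 +
              4 * ‖∑ i ∈ Finset.Icc (k - 2) (k - 1), bseq k a i * star (cseq k a i)‖ ^ 2)))) -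
          (Real.sqrt ((1 / 2) * (1 + (∑ i ∈ Finset.range (k - 2), ‖a i‖ ^ 2) +
            Real.sqrt ((1 + (∑ i ∈ Finset.range (k - 2), ‖a i‖ ^ 2)) ^ 2 -
              4 * (‖a 0‖ ^ 2 + ‖a 1‖ ^ 2 + ‖a 2‖ ^ 2)))))) ^ 2 +
         4 * Real.sqrt (‖a (k - 1)‖ ^ 2 + ‖a (k - 2)‖ ^ 2 + 1) *
           Real.sqrt ((1 / 2) * ((∑ i ∈ Finset.range (k - 2), (‖bseq k a i‖ ^ 2 + ‖cseq k a i‖ ^ 2)) +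
            Real.sqrt ((∑ i ∈ Finset.range (k - 2), (‖bseq k a i‖ ^ 2 - ‖cseq k a i‖ ^ 2)) ^ 2 +
              4 * ‖∑ i ∈ Finset.range (k - 2), bseq k a i * star (cseq k a i)‖ ^ 2))))))
      ^ ((1 : ℝ) / 3) := by
  obtain ⟨m, rfl⟩ : ∃ m, k = m + 5 := ⟨k - 5, by omega⟩
  unfold IsPolyZero at hz
  rw [add_comm] at hz
  have hS := eq_neg_of_add_eq_zero_left hz
  -- power relations
  have h0 : z ^ (m + 5) = ∑ i ∈ Finset.range (m + 5), (fun j => -a j) i * z ^ i := by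
    rw [hS, ← Finset.sum_neg_distrib]
    exact Finset.sum_congr rfl fun i _ => by simp [neg_mul]
  have h1 := step a (fun j => -a j) z (m + 4) (m + 5) hS h0
  have rel2 : z ^ (m + 6) = ∑ i ∈ Finset.range (m + 5), bseq (m + 5) a i * z ^ i := by
    rw [h1]
    refine Finset.sum_congr rfl fun i _ => ?_
    congr 1
    rcases i with _ | j
    · simp [bseq]
    · simp only [bseq, if_neg (Nat.succ_ne_zero j), Nat.succ_sub_one,
        show m + 5 - 1 = m + 4 from rfl]
      noncomm_ring
  have h2 := step a (bseq (m + 5) a) z (m + 4) (m + 6) hS rel2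
  have rel3 : z ^ (m + 7) = ∑ i ∈ Finset.range (m + 5), cseq (m + 5) a i * z ^ i := by
    rw [h2]
    refine Finset.sum_congr rfl fun i _ => ?_
    congr 1
    match i with
    | 0 =>
        simp only [cseq, bseq, if_pos rfl, if_pos (by norm_num : (0:ℕ) ≤ 1),
          show m + 5 - 1 = m + 4 from rfl, show m + 5 - 2 = m + 3 from rfl,
          if_neg (by omega : ¬ (m + 4 = 0)), show m + 4 - 1 = m + 3 from rfl,
          mul_zero, sub_zero, zero_sub]
        noncomm_ring
        try simp
    | 1 =>
        simp only [cseq, bseq, if_neg (by omega : ¬ (1 = 0)), if_pos (le_refl 1),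
          show m + 5 - 1 = m + 4 from rfl, show m + 5 - 2 = m + 3 from rfl,
          if_neg (by omega : ¬ (m + 4 = 0)), show (1:ℕ) - 1 = 0 from rfl, if_pos rfl,
          mul_zero, sub_zero, zero_sub]
        noncomm_ring
        try simp
    | (j + 2) =>
        simp only [cseq, bseq, if_neg (by omega : ¬ (j + 2 = 0)),
          if_neg (by omega : ¬ (j + 2 ≤ 1)), if_neg (by omega : ¬ (j + 1 = 0)),
          show j + 2 - 1 = j + 1 from rfl, show j + 1 - 1 = j from rfl,
          show j + 2 - 2 = j from rfl,
          show m + 5 - 1 = m + 4 from rfl, show m + 5 - 2 = m + 3 from rfl,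
          if_neg (by omega : ¬ (m + 4 = 0)), show m + 4 - 1 = m + 3 from rfl,
          mul_zero, sub_zero, zero_sub]
        noncomm_ring
        try simp
  -- normalize indices in the goal
  simp only [show m + 5 - 2 = m + 3 from rfl, show m + 5 - 1 = m + 4 from rfl]
  -- name all quantities
  set Q := ‖a 0‖ ^ 2 + ‖a 1‖ ^ 2 + ‖a 2‖ ^ 2 with hQdef
  set S := ∑ i ∈ Finset.range (m + 3), ‖a i‖ ^ 2 with hSdef
  set η₂ := Real.sqrt ((1 / 2) * (1 + S + Real.sqrt ((1 + S) ^ 2 - 4 * Q))) with hη₂def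
  set τ₁ := Real.sqrt (‖a (m + 4)‖ ^ 2 + ‖a (m + 3)‖ ^ 2 + 1) with hτ₁def
  set η₁ := Real.sqrt ((1 / 2) * ((∑ i ∈ Finset.Icc (m + 3) (m + 4),
      (‖bseq (m + 5) a i‖ ^ 2 + ‖cseq (m + 5) a i‖ ^ 2)) +
      Real.sqrt ((∑ i ∈ Finset.Icc (m + 3) (m + 4),
        (‖bseq (m + 5) a i‖ ^ 2 - ‖cseq (m + 5) a i‖ ^ 2)) ^ 2 +
        4 * ‖∑ i ∈ Finset.Icc (m + 3) (m + 4),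
          bseq (m + 5) a i * star (cseq (m + 5) a i)‖ ^ 2))) with hη₁def
  set τ₂ := Real.sqrt ((1 / 2) * ((∑ i ∈ Finset.range (m + 3),
      (‖bseq (m + 5) a i‖ ^ 2 + ‖cseq (m + 5) a i‖ ^ 2)) +
      Real.sqrt ((∑ i ∈ Finset.range (m + 3),
        (‖bseq (m + 5) a i‖ ^ 2 - ‖cseq (m + 5) a i‖ ^ 2)) ^ 2 +
        4 * ‖∑ i ∈ Finset.range (m + 3),
          bseq (m + 5) a i * star (cseq (m + 5) a i)‖ ^ 2))) with hτ₂def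
  set α := Real.sqrt (∑ i ∈ Finset.range (m + 3), ‖z ^ i‖ ^ 2) with hαdef
  set β := Real.sqrt (‖z ^ (m + 3)‖ ^ 2 + ‖z ^ (m + 4)‖ ^ 2) with hβdef
  clear_value α β τ₂ η₁ τ₁ η₂ S Q
  have hη₁nn : 0 ≤ η₁ := by rw [hη₁def]; exact Real.sqrt_nonneg _
  have hη₂nn : 0 ≤ η₂ := by rw [hη₂def]; exact Real.sqrt_nonneg _
  have hτ₁nn : 0 ≤ τ₁ := by rw [hτ₁def]; exact Real.sqrt_nonneg _
  have hτ₂nn : 0 ≤ τ₂ := by rw [hτ₂def]; exact Real.sqrt_nonneg _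
  have hβnn : 0 ≤ β := by rw [hβdef]; exact Real.sqrt_nonneg _
  have hα1 : 1 ≤ α := by
    have hsum1 : (1 : ℝ) ≤ ∑ i ∈ Finset.range (m + 3), ‖z ^ i‖ ^ 2 := by
      have := Finset.single_le_sum (f := fun i => ‖z ^ i‖ ^ 2)
        (fun i _ => by positivity) (Finset.mem_range.mpr (show 0 < m + 3 by omega))
      simpa using this
    calc (1 : ℝ) = Real.sqrt 1 := Real.sqrt_one.symm
      _ ≤ α := by rw [hαdef]; exact Real.sqrt_le_sqrt hsum1
  -- First main inequality
  have hI : ‖z‖ ^ 3 * α ≤ η₂ * α + τ₁ * β := by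
    set w := ∑ i ∈ Finset.range (m + 3), a i * z ^ i with hwdef
    set w' := a (m + 3) * z ^ (m + 3) + a (m + 4) * z ^ (m + 4) with hw'def
    clear_value w w'
    have hz5 : z ^ (m + 5) = -(w + w') := by
      rw [hS]
      congr 1
      rw [show m + 5 = (m + 4) + 1 from rfl, Finset.sum_range_succ,
        show m + 4 = (m + 3) + 1 from rfl, Finset.sum_range_succ]
      rw [hw'def, ← hwdef, add_assoc]
    set T := ∑ i ∈ Finset.range m, ‖z ^ (i + 3)‖ ^ 2 with hTdef
    clear_value T
    have hTnn : 0 ≤ T := by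
      rw [hTdef]; exact Finset.sum_nonneg fun i _ => by positivity
    have hLHS : ‖z‖ ^ 3 * α = Real.sqrt (∑ i ∈ Finset.range (m + 3), ‖z ^ (i + 3)‖ ^ 2) := by
      have hc : ∀ i ∈ Finset.range (m + 3), ‖z ^ (i + 3)‖ ^ 2 = ‖z‖ ^ 6 * ‖z ^ i‖ ^ 2 := by
        intro i _; rw [norm_pow, norm_pow]; ring
      rw [Finset.sum_congr rfl hc, ← Finset.mul_sum, Real.sqrt_mul (by positivity),
        show (‖z‖ : ℝ) ^ 6 = (‖z‖ ^ 3) ^ 2 by ring, Real.sqrt_sq (by positivity), ← hαdef]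
    have hsum : ∑ i ∈ Finset.range (m + 3), ‖z ^ (i + 3)‖ ^ 2
        = T + (‖z ^ (m + 3)‖ ^ 2 + ‖z ^ (m + 4)‖ ^ 2) + ‖w + w'‖ ^ 2 := by
      rw [show m + 3 = (m + 2) + 1 from rfl, Finset.sum_range_succ,
        show m + 2 = (m + 1) + 1 from rfl, Finset.sum_range_succ, Finset.sum_range_succ]
      rw [show m + 1 + 3 = m + 4 from rfl, show m + 2 + 3 = m + 5 from rfl, hz5, norm_neg,
        ← hTdef]
      ring
    have hA : Real.sqrt (T + ‖w‖ ^ 2) ≤ η₂ * α := by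
      have h3a : ∑ i ∈ Finset.range 3, ‖a i‖ ^ 2 = Q := by
        rw [hQdef]; simp [Finset.sum_range_succ]
      set R := ∑ i ∈ Finset.range m, ‖a (3 + i)‖ ^ 2 with hRdef
      set s2 := ∑ i ∈ Finset.range 3, ‖z ^ i‖ ^ 2 with hs2def
      set t2 := ∑ i ∈ Finset.range m, ‖z ^ (3 + i)‖ ^ 2 with ht2def
      clear_value R s2 t2
      have hQnn : 0 ≤ Q := by rw [hQdef]; positivity
      have hRnn : 0 ≤ R := by rw [hRdef]; exact Finset.sum_nonneg fun i _ => by positivity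
      have hsnn : 0 ≤ s2 := by rw [hs2def]; exact Finset.sum_nonneg fun i _ => by positivity
      have htnn : 0 ≤ t2 := by rw [ht2def]; exact Finset.sum_nonneg fun i _ => by positivity
      have hTt2 : T = t2 := by
        rw [hTdef, ht2def]
        exact Finset.sum_congr rfl fun i _ => by rw [Nat.add_comm]
      have hSQR : S = Q + R := by
        rw [hSdef, show m + 3 = 3 + m from by omega, Finset.sum_range_add, h3a, hRdef]
      have hαeq : α = Real.sqrt (s2 + t2) := by
        rw [hαdef]
        congr 1
        rw [show m + 3 = 3 + m from by omega, Finset.sum_range_add, hs2def, ht2def]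
      have hwle : ‖w‖ ≤ Real.sqrt Q * Real.sqrt s2 + Real.sqrt R * Real.sqrt t2 := by
        have hwsplit : w = (∑ i ∈ Finset.range 3, a i * z ^ i)
            + ∑ i ∈ Finset.range m, a (3 + i) * z ^ (3 + i) := by
          rw [hwdef, show m + 3 = 3 + m from by omega, Finset.sum_range_add]
        calc ‖w‖ = ‖(∑ i ∈ Finset.range 3, a i * z ^ i)
              + ∑ i ∈ Finset.range m, a (3 + i) * z ^ (3 + i)‖ := by rw [← hwsplit]
          _ ≤ ‖∑ i ∈ Finset.range 3, a i * z ^ i‖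
              + ‖∑ i ∈ Finset.range m, a (3 + i) * z ^ (3 + i)‖ := norm_add_le _ _
          _ ≤ Real.sqrt Q * Real.sqrt s2 + Real.sqrt R * Real.sqrt t2 := by
              have c1 := cs_q (Finset.range 3) a (fun i => z ^ i)
              have c2 := cs_q (Finset.range m) (fun i => a (3 + i)) (fun i => z ^ (3 + i))
              rw [h3a, ← hs2def] at c1
              rw [← hRdef, ← ht2def] at c2
              exact add_le_add c1 c2
      have hbl := blockA Q R s2 t2 ‖w‖ hQnn hRnn hsnn htnn (norm_nonneg w) hwle
      rw [← hSQR, ← hη₂def, ← hαeq] at hbl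
      rw [hTt2]
      exact hbl
    have hB : Real.sqrt ((‖z ^ (m + 3)‖ ^ 2 + ‖z ^ (m + 4)‖ ^ 2) + ‖w'‖ ^ 2) ≤ τ₁ * β := by
      have hm'le : ‖w'‖ ≤ ‖a (m + 3)‖ * ‖z ^ (m + 3)‖ + ‖a (m + 4)‖ * ‖z ^ (m + 4)‖ := by
        rw [hw'def]
        calc ‖a (m + 3) * z ^ (m + 3) + a (m + 4) * z ^ (m + 4)‖
            ≤ ‖a (m + 3) * z ^ (m + 3)‖ + ‖a (m + 4) * z ^ (m + 4)‖ := norm_add_le _ _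
          _ = ‖a (m + 3)‖ * ‖z ^ (m + 3)‖ + ‖a (m + 4)‖ * ‖z ^ (m + 4)‖ := by
              rw [norm_mul, norm_mul]
      have hYle : (‖z ^ (m + 3)‖ ^ 2 + ‖z ^ (m + 4)‖ ^ 2) + ‖w'‖ ^ 2
          ≤ (‖a (m + 4)‖ ^ 2 + ‖a (m + 3)‖ ^ 2 + 1)
            * (‖z ^ (m + 3)‖ ^ 2 + ‖z ^ (m + 4)‖ ^ 2) := by
        nlinarith only [hm'le, norm_nonneg w', norm_nonneg (z ^ (m + 3)), norm_nonneg (z ^ (m + 4)),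
          norm_nonneg (a (m + 3)), norm_nonneg (a (m + 4)),
          sq_nonneg (‖a (m + 3)‖ * ‖z ^ (m + 4)‖ - ‖a (m + 4)‖ * ‖z ^ (m + 3)‖)]
      calc Real.sqrt ((‖z ^ (m + 3)‖ ^ 2 + ‖z ^ (m + 4)‖ ^ 2) + ‖w'‖ ^ 2)
          ≤ Real.sqrt ((‖a (m + 4)‖ ^ 2 + ‖a (m + 3)‖ ^ 2 + 1)
              * (‖z ^ (m + 3)‖ ^ 2 + ‖z ^ (m + 4)‖ ^ 2)) := Real.sqrt_le_sqrt hYle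
        _ = τ₁ * β := by
            rw [Real.sqrt_mul (by positivity), ← hτ₁def, ← hβdef]
    have hXnn : 0 ≤ T + ‖w‖ ^ 2 := add_nonneg hTnn (by positivity)
    have hYnn : 0 ≤ (‖z ^ (m + 3)‖ ^ 2 + ‖z ^ (m + 4)‖ ^ 2) + ‖w'‖ ^ 2 := by positivity
    have hcross : T + (‖z ^ (m + 3)‖ ^ 2 + ‖z ^ (m + 4)‖ ^ 2) + ‖w + w'‖ ^ 2
        ≤ (T + ‖w‖ ^ 2) + ((‖z ^ (m + 3)‖ ^ 2 + ‖z ^ (m + 4)‖ ^ 2) + ‖w'‖ ^ 2)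
          + 2 * Real.sqrt (T + ‖w‖ ^ 2)
            * Real.sqrt ((‖z ^ (m + 3)‖ ^ 2 + ‖z ^ (m + 4)‖ ^ 2) + ‖w'‖ ^ 2) := by
      have t1 : ‖w + w'‖ ≤ ‖w‖ + ‖w'‖ := norm_add_le _ _
      have t2' : ‖w‖ ≤ Real.sqrt (T + ‖w‖ ^ 2) :=
        (Real.le_sqrt (norm_nonneg w) hXnn).mpr (by nlinarith only [hTnn])
      have t3 : ‖w'‖ ≤ Real.sqrt ((‖z ^ (m + 3)‖ ^ 2 + ‖z ^ (m + 4)‖ ^ 2) + ‖w'‖ ^ 2) :=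
        (Real.le_sqrt (norm_nonneg w') hYnn).mpr (le_add_of_nonneg_left (by positivity))
      have a1 : ‖w + w'‖ ^ 2 ≤ (‖w‖ + ‖w'‖) ^ 2 :=
        pow_le_pow_left₀ (norm_nonneg _) t1 2
      have a2 : ‖w‖ * ‖w'‖ ≤ Real.sqrt (T + ‖w‖ ^ 2) *
          Real.sqrt ((‖z ^ (m + 3)‖ ^ 2 + ‖z ^ (m + 4)‖ ^ 2) + ‖w'‖ ^ 2) :=
        mul_le_mul t2' t3 (norm_nonneg w') (Real.sqrt_nonneg _)
      nlinarith only [a1, a2]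
    calc ‖z‖ ^ 3 * α = Real.sqrt (∑ i ∈ Finset.range (m + 3), ‖z ^ (i + 3)‖ ^ 2) := hLHS
      _ = Real.sqrt (T + (‖z ^ (m + 3)‖ ^ 2 + ‖z ^ (m + 4)‖ ^ 2) + ‖w + w'‖ ^ 2) := by
          rw [hsum]
      _ ≤ Real.sqrt (T + ‖w‖ ^ 2)
          + Real.sqrt ((‖z ^ (m + 3)‖ ^ 2 + ‖z ^ (m + 4)‖ ^ 2) + ‖w'‖ ^ 2) :=
          sqrt_add_le _ _ _ hXnn hYnn hcross
      _ ≤ η₂ * α + τ₁ * β := add_le_add hA hB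
  -- Second main inequality
  have hII : ‖z‖ ^ 3 * β ≤ τ₂ * α + η₁ * β := by
    have hIcc : Finset.Icc (m + 3) (m + 4) = {m + 3, m + 4} := by
      ext x
      simp only [Finset.mem_Icc, Finset.mem_insert, Finset.mem_singleton]
      omega
    set p₁ := ∑ i ∈ Finset.range (m + 3), bseq (m + 5) a i * z ^ i with hp₁
    set q₁ := ∑ i ∈ Finset.range (m + 3), cseq (m + 5) a i * z ^ i with hq₁
    set p₂ := ∑ i ∈ Finset.Icc (m + 3) (m + 4), bseq (m + 5) a i * z ^ i with hp₂
    set q₂ := ∑ i ∈ Finset.Icc (m + 3) (m + 4), cseq (m + 5) a i * z ^ i with hq₂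
    clear_value p₁ q₁ p₂ q₂
    have hp₂' : p₂ = bseq (m + 5) a (m + 3) * z ^ (m + 3)
        + bseq (m + 5) a (m + 4) * z ^ (m + 4) := by
      rw [hp₂, hIcc, Finset.sum_pair (by omega)]
    have hq₂' : q₂ = cseq (m + 5) a (m + 3) * z ^ (m + 3)
        + cseq (m + 5) a (m + 4) * z ^ (m + 4) := by
      rw [hq₂, hIcc, Finset.sum_pair (by omega)]
    have hzp : z ^ (m + 6) = p₁ + p₂ := by
      rw [rel2, show m + 5 = (m + 4) + 1 from rfl, Finset.sum_range_succ,
        show m + 4 = (m + 3) + 1 from rfl, Finset.sum_range_succ, ← hp₁, hp₂', add_assoc]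
    have hzq : z ^ (m + 7) = q₁ + q₂ := by
      rw [rel3, show m + 5 = (m + 4) + 1 from rfl, Finset.sum_range_succ,
        show m + 4 = (m + 3) + 1 from rfl, Finset.sum_range_succ, ← hq₁, hq₂', add_assoc]
    have hLHS2 : ‖z‖ ^ 3 * β = Real.sqrt (‖z ^ (m + 6)‖ ^ 2 + ‖z ^ (m + 7)‖ ^ 2) := by
      rw [show ‖z ^ (m + 6)‖ ^ 2 = ‖z‖ ^ 6 * ‖z ^ (m + 3)‖ ^ 2 from by
          rw [norm_pow, norm_pow]; ring,
        show ‖z ^ (m + 7)‖ ^ 2 = ‖z‖ ^ 6 * ‖z ^ (m + 4)‖ ^ 2 from by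
          rw [norm_pow, norm_pow]; ring,
        ← mul_add, Real.sqrt_mul (by positivity),
        show (‖z‖ : ℝ) ^ 6 = (‖z‖ ^ 3) ^ 2 from by ring, Real.sqrt_sq (by positivity), ← hβdef]
    have hXnn : 0 ≤ ‖p₁‖ ^ 2 + ‖q₁‖ ^ 2 := by positivity
    have hYnn : 0 ≤ ‖p₂‖ ^ 2 + ‖q₂‖ ^ 2 := by positivity
    have hcross2 : ‖p₁‖ * ‖p₂‖ + ‖q₁‖ * ‖q₂‖
        ≤ Real.sqrt (‖p₁‖ ^ 2 + ‖q₁‖ ^ 2) * Real.sqrt (‖p₂‖ ^ 2 + ‖q₂‖ ^ 2) := by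
      rw [← Real.sqrt_mul hXnn]
      apply (Real.le_sqrt (by positivity) (by positivity)).mpr
      nlinarith only [sq_nonneg (‖p₁‖ * ‖q₂‖ - ‖q₁‖ * ‖p₂‖), norm_nonneg p₁, norm_nonneg p₂,
        norm_nonneg q₁, norm_nonneg q₂]
    have hZ2 : ‖p₁ + p₂‖ ^ 2 + ‖q₁ + q₂‖ ^ 2
        ≤ (‖p₁‖ ^ 2 + ‖q₁‖ ^ 2) + (‖p₂‖ ^ 2 + ‖q₂‖ ^ 2)
          + 2 * Real.sqrt (‖p₁‖ ^ 2 + ‖q₁‖ ^ 2) * Real.sqrt (‖p₂‖ ^ 2 + ‖q₂‖ ^ 2) := by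
      have a1 : ‖p₁ + p₂‖ ^ 2 ≤ (‖p₁‖ + ‖p₂‖) ^ 2 :=
        pow_le_pow_left₀ (norm_nonneg _) (norm_add_le p₁ p₂) 2
      have a2 : ‖q₁ + q₂‖ ^ 2 ≤ (‖q₁‖ + ‖q₂‖) ^ 2 :=
        pow_le_pow_left₀ (norm_nonneg _) (norm_add_le q₁ q₂) 2
      nlinarith only [a1, a2, hcross2]
    have hrp1 : Real.sqrt (‖p₁‖ ^ 2 + ‖q₁‖ ^ 2) ≤ τ₂ * α := by
      have hr := rowpair (Finset.range (m + 3)) (bseq (m + 5) a) (cseq (m + 5) a)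
        (fun i => z ^ i)
      rw [← hp₁, ← hq₁, ← hτ₂def, ← hαdef] at hr
      exact hr
    have hrp2 : Real.sqrt (‖p₂‖ ^ 2 + ‖q₂‖ ^ 2) ≤ η₁ * β := by
      have hr := rowpair (Finset.Icc (m + 3) (m + 4)) (bseq (m + 5) a) (cseq (m + 5) a)
        (fun i => z ^ i)
      have hu : ∑ i ∈ Finset.Icc (m + 3) (m + 4), ‖z ^ i‖ ^ 2
          = ‖z ^ (m + 3)‖ ^ 2 + ‖z ^ (m + 4)‖ ^ 2 := by
        rw [hIcc, Finset.sum_pair (by omega)]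
      rw [← hp₂, ← hq₂, hu, ← hβdef, ← hη₁def] at hr
      exact hr
    calc ‖z‖ ^ 3 * β = Real.sqrt (‖z ^ (m + 6)‖ ^ 2 + ‖z ^ (m + 7)‖ ^ 2) := hLHS2
      _ = Real.sqrt (‖p₁ + p₂‖ ^ 2 + ‖q₁ + q₂‖ ^ 2) := by rw [hzp, hzq]
      _ ≤ Real.sqrt (‖p₁‖ ^ 2 + ‖q₁‖ ^ 2) + Real.sqrt (‖p₂‖ ^ 2 + ‖q₂‖ ^ 2) :=
          sqrt_add_le _ _ _ hXnn hYnn hZ2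
      _ ≤ τ₂ * α + η₁ * β := add_le_add hrp1 hrp2
  -- Perron-type combination
  have hperron := perron (‖z‖ ^ 3) α β η₁ η₂ τ₁ τ₂ hα1 hβnn hη₁nn hη₂nn hτ₁nn hτ₂nn hI hII
  have h3 : ‖z‖ = ((‖z‖ ^ 3 : ℝ)) ^ ((1 : ℝ) / 3) := by
    rw [← Real.rpow_natCast ‖z‖ 3, ← Real.rpow_mul (norm_nonneg z)]
    norm_num
  calc ‖z‖ = ((‖z‖ ^ 3 : ℝ)) ^ ((1 : ℝ) / 3) := h3
    _ ≤ ((1 / 2) * (η₁ + η₂ + Real.sqrt ((η₁ - η₂) ^ 2 + 4 * τ₁ * τ₂))) ^ ((1 : ℝ) / 3) :=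
        Real.rpow_le_rpow (by positivity) hperron (by norm_num)
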